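/- Let d ≥ 2 and let c₀ ∈ ℚ̄ be such that f(z) = z^d + c₀ is PCF of exact type (m, n) with m ≥ 1. Let K = ℚ(c₀) and let v be a finite place of K with v(d) = 0. Then v(a_i(c₀)) = 0 for all i ≥ 1. -/

import Mathlib

open NumberField IsDedekindDomain

/-- If f(z) = z^d + c₀ is PCF of exact type (m,n) with m ≥ 1,
K = ℚ(c₀), and v is a finite place of K with v(d) = 0, then v(a_i(c₀)) = 0 for
all i ≥ 1 (multiplicatively: intValuation = 1). -/
theorem stmt9 (d : ℕ) (hd : 2 ≤ d) (K : Type*) [Field K] [NumberField K]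
    (c₀ : 𝓞 K) (hK : Algebra.adjoin ℚ {algebraMap (𝓞 K) K c₀} = ⊤)
    (a : ℕ → 𝓞 K) (ha0 : a 0 = 0) (haS : ∀ i, a (i + 1) = a i ^ d + c₀)
    (m n : ℕ) (hm : 1 ≤ m) (hn : 1 ≤ n)
    (hper : a (m + n) = a m)
    (hnmin : ∀ k, 0 < k → k < n → a (m + k) ≠ a m)
    (hmmin : ∀ m', m' < m → ∀ k, 0 < k → a (m' + k) ≠ a m')
    (v : HeightOneSpectrum (𝓞 K)) (hvd : v.intValuation (d : 𝓞 K) = 1) :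
    ∀ i, 1 ≤ i → v.intValuation (a i) = 1 := by
  set V := v.intValuation with hVdef
  have hVle : ∀ z : 𝓞 K, V z ≤ 1 := fun z => v.intValuation_le_one z
  have hVne : ∀ z : 𝓞 K, z ≠ 0 → V z ≠ 0 := fun z hz => v.intValuation_ne_zero z hz
  -- nonvanishing of orbit
  have hne : ∀ t, 1 ≤ t → a t ≠ 0 := by
    intro t ht h
    exact hmmin 0 hm t ht (by simpa [ha0] using h)
  -- value of a divisor bounds value
  have hdvdle : ∀ z w : 𝓞 K, z ∣ w → V w ≤ V z := by
    intro z w ⟨c, hc⟩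
    rw [hc, map_mul]
    calc V z * V c ≤ V z * 1 := mul_le_mul_right (hVle c) _
    _ = V z := mul_one _
  -- one-step propagation of congruences
  have hstep : ∀ s t, V (a (s + 1) - a (t + 1)) ≤ V (a s - a t) := by
    intro s t
    have h1 : a (s + 1) - a (t + 1) = a s ^ d - a t ^ d := by rw [haS, haS]; ring
    rw [h1]
    exact hdvdle _ _ (sub_dvd_pow_sub_pow _ _ _)
  have hmany : ∀ k s t, V (a (s + k) - a (t + k)) ≤ V (a s - a t) := by
    intro k
    induction k with
    | zero => intro s t; rfl
    | succ k ih => intro s t; exact le_trans (hstep (s + k) (t + k)) (ih s t)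
  have hprop : ∀ j t, V (a (j + t) - a t) ≤ V (a j) := by
    intro j t
    simpa [ha0] using hmany t j 0
  -- exact periodicity beyond m
  have hP : ∀ k, a (m + k + n) = a (m + k) := by
    intro k
    induction k with
    | zero => simpa using hper
    | succ k ih =>
      have h1 : m + (k + 1) + n = (m + k + n) + 1 := by omega
      rw [h1, haS, ih, ← haS]
      congr 1
  -- goal
  intro i hi
  by_contra hbad
  have hji : V (a i) < 1 := lt_of_le_of_ne (hVle _) hbad
  -- multi-step smallness
  have hmulti : ∀ s t, V (a (i * s + t) - a t) < 1 := by
    intro s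
    induction s with
    | zero => intro t; simp
    | succ s ih =>
      intro t
      have h1 : a (i * (s + 1) + t) - a t
          = (a (i + (i * s + t)) - a (i * s + t)) + (a (i * s + t) - a t) := by
        have : i * (s + 1) + t = i + (i * s + t) := by ring
        rw [this]; ring
      rw [h1]
      exact lt_of_le_of_lt (Valuation.map_add _ _ _)
        (max_lt (lt_of_le_of_lt (hprop i _) hji) (ih t))
  -- period n congruence everywhere
  have hn' : ∀ t, V (a (t + n) - a t) < 1 := by
    intro t
    have hkey : a (i * m + (t + n)) = a (i * m + t) := by
      have h1 : i * m + (t + n) = m + (i * m + t - m) + n := by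
        have : m ≤ i * m := Nat.le_mul_of_pos_left m (by omega)
        omega
      have h2 : i * m + t = m + (i * m + t - m) := by
        have : m ≤ i * m := Nat.le_mul_of_pos_left m (by omega)
        omega
      have h3 := hP (i * m + t - m)
      rw [← h1] at h3
      rw [← h2] at h3
      exact h3
    have h1 : a (t + n) - a t
        = -(a (i * m + (t + n)) - a (t + n)) + (a (i * m + t) - a t) := by
      rw [hkey]; ring
    rw [h1]
    refine lt_of_le_of_lt (Valuation.map_add _ _ _) (max_lt ?_ (hmulti m t))
    rw [Valuation.map_neg]
    exact hmulti m (t + n)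
  -- minimal index g
  have hEx : ∃ t, 1 ≤ t ∧ V (a t) < 1 := ⟨i, hi, hji⟩
  set g := Nat.find hEx with hgdef
  obtain ⟨hg1, hgV⟩ : 1 ≤ g ∧ V (a g) < 1 := Nat.find_spec hEx
  have hgmin : ∀ t, t < g → ¬(1 ≤ t ∧ V (a t) < 1) := fun t ht => Nat.find_min hEx ht
  have hunit : ∀ t, 1 ≤ t → t < g → V (a t) = 1 := by
    intro t h1 h2
    by_contra h
    exact hgmin t h2 ⟨h1, lt_of_le_of_ne (hVle _) h⟩
  have hgdvd : ∀ t, 1 ≤ t → V (a t) < 1 → g ∣ t := by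
    intro t
    induction t using Nat.strong_induction_on with
    | _ t ih =>
      intro h1 h2
      rcases lt_trichotomy t g with h | h | h
      · exact absurd ⟨h1, h2⟩ (hgmin t h)
      · exact h ▸ dvd_refl g
      · have ht' : 1 ≤ t - g := by omega
        have hdiff : V (a t - a (t - g)) < 1 := by
          have := hprop g (t - g)
          rw [show g + (t - g) = t by omega] at this
          exact lt_of_le_of_lt this hgV
        have h3 : V (a (t - g)) < 1 := by
          have h4 : a (t - g) = -(a t - a (t - g)) + a t := by ring
          rw [h4]
          exact lt_of_le_of_lt (Valuation.map_add _ _ _)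
            (max_lt (by rwa [Valuation.map_neg]) h2)
        obtain ⟨u, hu⟩ := ih (t - g) (by omega) ht' h3
        exact ⟨u + 1, by rw [Nat.mul_succ, ← hu]; omega⟩
  -- the pair x, y
  set y := a (m - 1) with hy
  set x := a (m - 1 + n) with hx
  have hxny : x ≠ y := hmmin (m - 1) (by omega) n hn
  have hxdyd : x ^ d = y ^ d := by
    have h1 : a (m - 1 + 1) = y ^ d + c₀ := haS (m - 1)
    have h2 : a (m - 1 + n + 1) = x ^ d + c₀ := haS (m - 1 + n)
    rw [show m - 1 + 1 = m by omega] at h1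
    rw [show m - 1 + n + 1 = m + n by omega] at h2
    have := h2.symm.trans (hper.trans h1)
    exact add_right_cancel this
  have hSzero : (∑ j ∈ Finset.range d, x ^ j * y ^ (d - 1 - j)) = 0 := by
    have h1 := geom_sum₂_mul x y d
    rw [hxdyd, sub_self] at h1
    rcases mul_eq_zero.mp h1 with h | h
    · exact h
    · exact absurd (sub_eq_zero.mp h) hxny
  -- divisibility lemma
  have hsub : ∀ u w : 𝓞 K,
      (u - w) ∣ (∑ j ∈ Finset.range d, u ^ j * w ^ (d - 1 - j)) - (d : 𝓞 K) * w ^ (d - 1) := by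
    intro u w
    have h1 : (∑ j ∈ Finset.range d, u ^ j * w ^ (d - 1 - j)) - (d : 𝓞 K) * w ^ (d - 1)
        = ∑ j ∈ Finset.range d, (u ^ j - w ^ j) * w ^ (d - 1 - j) := by
      have h2 : ∀ j ∈ Finset.range d, (u ^ j - w ^ j) * w ^ (d - 1 - j)
          = u ^ j * w ^ (d - 1 - j) - w ^ (d - 1) := by
        intro j hj
        rw [sub_mul, ← pow_add]
        congr 2
        have := Finset.mem_range.mp hj
        omega
      rw [Finset.sum_congr rfl h2, Finset.sum_sub_distrib, Finset.sum_const,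
        Finset.card_range, nsmul_eq_mul]
    rw [h1]
    exact Finset.dvd_sum fun j _ => Dvd.dvd.mul_right (sub_dvd_pow_sub_pow u w j) _
  have hdvd : (x - y) ∣ (d : 𝓞 K) * y ^ (d - 1) := by
    have := hsub x y
    rw [hSzero, zero_sub] at this
    exact (dvd_neg).mp this
  have hxmy : V (x - y) < 1 := hn' (m - 1)
  -- V y < 1 and m ≥ 2
  have hVy : V y < 1 := by
    have h1 : V ((d : 𝓞 K) * y ^ (d - 1)) < 1 := lt_of_le_of_lt (hdvdle _ _ hdvd) hxmy
    rw [map_mul, map_pow, hvd, one_mul] at h1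
    by_contra h
    have : V y = 1 := le_antisymm (hVle _) (not_lt.mp h)
    rw [this, one_pow] at h1
    exact absurd h1 (lt_irrefl 1)
  have hy0 : y ≠ 0 := by
    intro h
    rw [h] at hxdyd
    rw [zero_pow (by omega), pow_eq_zero_iff (by omega : d ≠ 0)] at hxdyd
    exact hxny (hxdyd.trans h.symm)
  have hm2 : 2 ≤ m := by
    rcases Nat.lt_or_ge m 2 with h | h
    · interval_cases m
      · exact absurd ha0 (by simpa [hy] using hy0)
    · exact h
  -- the S-sum is a unit when arguments are congruent and w is a unit
  have hvalS : ∀ u w : 𝓞 K, V (u - w) < 1 → V w = 1 →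
      V (∑ j ∈ Finset.range d, u ^ j * w ^ (d - 1 - j)) = 1 := by
    intro u w h1 h2
    have hdw : V ((d : 𝓞 K) * w ^ (d - 1)) = 1 := by
      rw [map_mul, map_pow, hvd, h2, one_pow, mul_one]
    have h3 : V ((∑ j ∈ Finset.range d, u ^ j * w ^ (d - 1 - j)) - (d : 𝓞 K) * w ^ (d - 1)) < 1 :=
      lt_of_le_of_lt (hdvdle _ _ (hsub u w)) h1
    have h4 : (∑ j ∈ Finset.range d, u ^ j * w ^ (d - 1 - j))
        = ((∑ j ∈ Finset.range d, u ^ j * w ^ (d - 1 - j)) - (d : 𝓞 K) * w ^ (d - 1))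
          + (d : 𝓞 K) * w ^ (d - 1) := by ring
    rw [h4, Valuation.map_add_eq_of_lt_right _ (by rw [hdw]; exact h3), hdw]
  -- W1 : contraction by one period of length g
  have hW1 : ∀ s, 1 ≤ s → V (a s) < 1 → V (a (s + g) - a g) = V (a s) ^ d := by
    intro s hs1 hs2
    have hbase : V (a (s + 1) - a 1) = V (a s) ^ d := by
      have h1 : a 1 = c₀ := by
        simpa [ha0, zero_pow (show d ≠ 0 by omega)] using haS 0
      rw [haS, h1, add_sub_cancel_right, map_pow]
    have hkey : ∀ j, 1 ≤ j → j ≤ g → V (a (s + j) - a j) = V (a s) ^ d := by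
      intro j
      induction j with
      | zero => omega
      | succ j ih =>
        intro h1 h2
        rcases Nat.eq_zero_or_pos j with hj0 | hj1
        · subst hj0; exact hbase
        · have ihv := ih hj1 (by omega)
          have hdiff : V (a (s + j) - a j) < 1 := by
            rw [ihv]
            exact pow_lt_one₀ (zero_le') hs2 (by omega)
          have hunitj : V (a j) = 1 := hunit j hj1 (by omega)
          have heq : a (s + (j + 1)) - a (j + 1)
              = (∑ t ∈ Finset.range d, (a (s + j)) ^ t * (a j) ^ (d - 1 - t)) * (a (s + j) - a j) := by
            rw [geom_sum₂_mul, show s + (j + 1) = (s + j) + 1 by omega, haS, haS]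
            ring
          rw [heq, map_mul, hvalS _ _ hdiff hunitj, one_mul, ihv]
    exact hkey g hg1 le_rfl
  set W := V (a g) with hWdef
  have hW0 : W ≠ 0 := hVne _ (hne g hg1)
  have hWlt : W < 1 := hgV
  have hWd : W ^ d < W := by
    calc W ^ d = W * W ^ (d - 1) := by
          rw [← pow_succ']; congr 1; omega
    _ < W * 1 := mul_lt_mul_of_pos_left (pow_lt_one₀ zero_le' hWlt (by omega)) (zero_lt_iff.mpr hW0)
    _ = W := mul_one W
  -- stabilization of values along multiples of g
  have hW2 : ∀ k, 1 ≤ k → V (a (g * k)) = W := by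
    intro k
    induction k with
    | zero => omega
    | succ k ih =>
      intro _
      rcases Nat.eq_zero_or_pos k with hk0 | hk1
      · subst hk0; simpa using hWdef ▸ rfl
      · have ihv := ih hk1
        have hgk1 : 1 ≤ g * k := Nat.one_le_iff_ne_zero.mpr (by positivity)
        have h1 : V (a (g * k + g) - a g) = W ^ d := by
          rw [hW1 (g * k) hgk1 (by rw [ihv]; exact hWlt), ihv]
        have h2 : a (g * (k + 1)) = (a (g * k + g) - a g) + a g := by
          rw [show g * (k + 1) = g * k + g from by ring]; ring
        rw [h2, Valuation.map_add_eq_of_lt_right _ (by rw [h1]; exact hWd)]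
  -- g divides m - 1 and n
  obtain ⟨q, hq⟩ := hgdvd (m - 1) (by omega) hVy
  obtain ⟨r, hr⟩ := hgdvd n hn (by simpa [ha0] using hn' 0)
  have hq1 : 1 ≤ q := by
    rcases Nat.eq_zero_or_pos q with h | h
    · rw [h, Nat.mul_zero] at hq; omega
    · exact h
  have hr1 : 1 ≤ r := by
    rcases Nat.eq_zero_or_pos r with h | h
    · rw [h, Nat.mul_zero] at hr; omega
    · exact h
  have hVyW : V y = W := by rw [hy, hq]; exact hW2 q hq1
  -- deep congruence for k ≥ 2
  have hcontr : ∀ k, 2 ≤ k → V (a (g * k) - a g) = W ^ d := by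
    intro k hk
    obtain ⟨k', rfl⟩ : ∃ k', k = k' + 1 := ⟨k - 1, by omega⟩
    have hgk1 : 1 ≤ g * k' := Nat.one_le_iff_ne_zero.mpr (Nat.mul_ne_zero (by omega) (by omega))
    have h2 := hW2 k' (by omega)
    rw [Nat.mul_succ, hW1 (g * k') hgk1 (by rw [h2]; exact hWlt), h2]
  have hxidx : m - 1 + n = g * (q + r) := by rw [hq, hr]; ring
  have hupper : V (x - y) ≤ W ^ d := by
    have hx1 : V (x - a g) = W ^ d := by
      rw [hx, hxidx]; exact hcontr (q + r) (by omega)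
    rcases eq_or_lt_of_le hq1 with hq1' | hq2
    · have hyg : y = a g := by rw [hy, hq, ← hq1', Nat.mul_one]
      rw [hyg]
      exact le_of_eq hx1
    · have hy1 : V (y - a g) = W ^ d := by
        rw [hy, hq]; exact hcontr q hq2
      have h3 : x - y = (x - a g) - (y - a g) := by ring
      rw [h3]
      exact le_trans (Valuation.map_sub _ _ _) (max_le (le_of_eq hx1) (le_of_eq hy1))
  have hlower : W ^ (d - 1) ≤ V (x - y) := by
    have h1 := hdvdle _ _ hdvd
    rwa [map_mul, map_pow, hvd, one_mul, hVyW] at h1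
  have hWd' : W ^ d < W ^ (d - 1) := by
    calc W ^ d = W ^ (d - 1) * W := by rw [← pow_succ]; congr 1; omega
    _ < W ^ (d - 1) * 1 := mul_lt_mul_of_pos_left hWlt (zero_lt_iff.mpr (pow_ne_zero _ hW0))
    _ = W ^ (d - 1) := mul_one _
  exact absurd (lt_of_le_of_lt (le_trans hlower hupper) hWd') (lt_irrefl _)
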